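/- For all integers m ≥ 0 and n ≥ 2, C(2n-4, m) = Σ_{k=2}^{n} 2^(m+4-2k) · C(n-k, m+4-2k) · C(n-2, k-2), where terms with negative binomial arguments are zero. -/

import Mathlib

open Polynomial Finset

lemma aux1 (M t : ℕ) : (((C 2 : ℕ[X]) * X + 1) ^ M).coeff t = 2 ^ t * M.choose t := by
  rw [add_pow, finset_sum_coeff]
  have key : ∀ i, ((C 2 * X : ℕ[X])^i * (1:ℕ[X])^(M-i) * (M.choose i : ℕ[X])).coeff t
      = if i = t then 2 ^ i * M.choose i else 0 := by
    intro i
    have : (C 2 * X : ℕ[X])^i * (1:ℕ[X])^(M-i) * (M.choose i : ℕ[X])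
        = C (2^i * M.choose i) * X^i := by
      rw [mul_pow, ← C_pow, ← C_eq_natCast, C_mul, one_pow]
      push_cast
      ring
    rw [this, coeff_C_mul, coeff_X_pow]
    by_cases h : i = t
    · simp [h]
    · simp [h, Ne.symm h]
  simp only [key]
  rw [Finset.sum_ite_eq' (Finset.range (M+1)) t]
  split
  · rfl
  · rename_i h'
    rw [Nat.choose_eq_zero_of_lt (by simpa using h'), mul_zero]

lemma aux2 (N m : ℕ) : (2 * N).choose m =
    ∑ j ∈ Finset.range (N + 1),
      if 2 * j ≤ m then 2 ^ (m - 2 * j) * (N - j).choose (m - 2 * j) * N.choose j else 0 := by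
  have h1 : ((X + 1 : ℕ[X]) ^ (2 * N)).coeff m = (2 * N).choose m := by
    rw [coeff_X_add_one_pow, Nat.cast_id]
  have h2 : (X + 1 : ℕ[X]) ^ (2 * N) = (X ^ 2 + (C 2 * X + 1)) ^ N := by
    rw [pow_mul]; ring_nf; norm_num [Polynomial.C_eq_natCast]
  rw [← h1, h2, add_pow, finset_sum_coeff]
  apply Finset.sum_congr rfl
  intro j hj
  have : ((X ^ 2 : ℕ[X]))^j * (C 2 * X + 1)^(N-j) * (N.choose j : ℕ[X])
      = ((C 2 * X + 1)^(N-j) * C (N.choose j)) * X ^ (2 * j) := by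
    rw [← pow_mul, show ((N.choose j : ℕ[X])) = C (N.choose j) from by simp]; ring
  rw [this, coeff_mul_X_pow', coeff_mul_C, aux1]

theorem stmt1 (m n : ℕ) (hn : 2 ≤ n) :
    (2 * n - 4).choose m =
      ∑ k ∈ Finset.Icc 2 n,
        if 2 * k ≤ m + 4 then
          2 ^ (m + 4 - 2 * k) * (n - k).choose (m + 4 - 2 * k) * (n - 2).choose (k - 2)
        else 0 := by
  have h0 : 2 * n - 4 = 2 * (n - 2) := by omega
  rw [h0, aux2 (n - 2) m]
  refine Finset.sum_bij' (fun j _ => j + 2) (fun k _ => k - 2) ?_ ?_ ?_ ?_ ?_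
  · intro a ha; simp only [Finset.mem_range] at ha; simp only [Finset.mem_Icc]; omega
  · intro a ha; simp only [Finset.mem_Icc] at ha; simp only [Finset.mem_range]; omega
  · intro a ha; omega
  · intro a ha; simp only [Finset.mem_Icc] at ha; omega
  · intro i hi
    simp only [Finset.mem_range] at hi
    have e1 : (2 * (i + 2) ≤ m + 4) ↔ (2 * i ≤ m) := by omega
    have e2 : m + 4 - 2 * (i + 2) = m - 2 * i := by omega
    have e3 : n - (i + 2) = n - 2 - i := by omega
    have e4 : i + 2 - 2 = i := by omega
    simp only [e2, e3, e4]
    by_cases h : 2 * i ≤ m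
    · rw [if_pos (e1.mpr h), if_pos h]
    · rw [if_neg (fun h' => h (e1.mp h')), if_neg h]
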